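/- Let f(z) = ∏_{i=1}^{n} (z - z_i) be a monic polynomial of degree n ≥ 2 over K with all roots satisfying |z_i| ≤ 1. Then for each root z_i of f there exists a root w of the derivative f' such that |z_i - w| ≤ |n|^{-1/(n-1)}, where |n| denotes the absolute value of the image of the integer n in K and the exponent is a real power. -/

import Mathlib

open Polynomial

section aux

variable {K : Type*} [Field K] (v : AbsoluteValue K ℝ)

lemma aux_sub_le (hna : IsNonarchimedean v) (x y : K) : v (x - y) ≤ max (v x) (v y) := by
  have := hna x (-y)
  simpa [sub_eq_add_neg, v.map_neg] using this

lemma aux_nat_le (hna : IsNonarchimedean v) (m : ℕ) : v (m : K) ≤ 1 := by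
  induction m with
  | zero => simp
  | succ k ih =>
    push_cast
    exact le_trans (hna _ _) (by simp [ih])

lemma aux_coeff_prod (hna : IsNonarchimedean v) (s : Multiset K) (hs : ∀ a ∈ s, v a ≤ 1) (k : ℕ) :
    v (((s.map fun a => X - C a).prod).coeff k) ≤ 1 := by
  induction s using Multiset.induction_on generalizing k with
  | empty =>
    simp only [Multiset.map_zero, Multiset.prod_zero, coeff_one]
    split <;> simp
  | cons a s ih =>
    have ha : v a ≤ 1 := hs a (Multiset.mem_cons_self a s)
    have hs' : ∀ b ∈ s, v b ≤ 1 := fun b hb => hs b (Multiset.mem_cons_of_mem hb)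
    rw [Multiset.map_cons, Multiset.prod_cons, sub_mul]
    set p := (s.map fun a => X - C a).prod with hp
    have hcoeff : ((X : K[X]) * p - C a * p).coeff k
        = (X * p).coeff k - a * p.coeff k := by
      simp [coeff_sub, coeff_C_mul]
    rw [hcoeff]
    refine le_trans (aux_sub_le v hna _ _) (max_le ?_ ?_)
    · rcases k with _ | k
      · simp [mul_coeff_zero]
      · rw [coeff_X_mul]; exact ih hs' k
    · rw [v.map_mul]
      calc v a * v (p.coeff k) ≤ 1 * 1 :=
            mul_le_mul ha (ih hs' k) (v.nonneg _) zero_le_one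
        _ = 1 := one_mul 1
    
lemma aux_sum_le (hna : IsNonarchimedean v) (s : Finset ℕ) (c : ℕ → K) (hc : ∀ k, v (c k) ≤ 1) :
    v (∑ k ∈ s, c k) ≤ 1 := by
  induction s using Finset.induction_on with
  | empty => simp
  | insert _ _ hx ih =>
    rw [Finset.sum_insert hx]
    exact le_trans (hna _ _) (max_le (hc _) ih)

lemma aux_exists_small (r : ℝ) (hr : 0 < r) (g : K → ℝ) (hg : ∀ a, 0 ≤ g a) :
    ∀ s : Multiset K, s ≠ 0 → (s.map g).prod ≤ r ^ Multiset.card s →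
      ∃ a ∈ s, g a ≤ r := by
  intro s
  induction s using Multiset.induction_on with
  | empty => simp
  | cons a s ih =>
    intro _ hprod
    by_cases hga : g a ≤ r
    · exact ⟨a, Multiset.mem_cons_self a s, hga⟩
    · push_neg at hga
      rcases eq_or_ne s 0 with rfl | hs0
      · simp only [Multiset.map_cons, Multiset.map_zero, Multiset.prod_cons,
          Multiset.prod_zero, mul_one, Multiset.card_cons, Multiset.card_zero,
          zero_add, pow_one] at hprod
        exact absurd hprod (not_le.mpr hga)
      · have hP : 0 ≤ (s.map g).prod := by
          apply Multiset.prod_nonneg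
          intro x hx
          obtain ⟨b, _, rfl⟩ := Multiset.mem_map.mp hx
          exact hg b
        have hkey : (s.map g).prod ≤ r ^ Multiset.card s := by
          by_contra hcon
          push_neg at hcon
          rw [Multiset.map_cons, Multiset.prod_cons, Multiset.card_cons,
            pow_succ'] at hprod
          have hrpow : 0 ≤ r ^ Multiset.card s := le_of_lt (pow_pos hr _)
          nlinarith [hg a]
        obtain ⟨b, hb, hgb⟩ := ih hs0 hkey
        exact ⟨b, Multiset.mem_cons_of_mem hb, hgb⟩

end aux

theorem nonarchimedean_sendov {K : Type*} [Field K] [IsAlgClosed K] [CharZero K]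
    (v : AbsoluteValue K ℝ) (hna : IsNonarchimedean v)
    (n : ℕ) (hn : 2 ≤ n) (f : Polynomial K) (hmonic : f.Monic)
    (hdeg : f.natDegree = n) (hroots : ∀ z : K, f.IsRoot z → v z ≤ 1) :
    ∀ z : K, f.IsRoot z → ∃ w : K, (Polynomial.derivative f).IsRoot w ∧
      v (z - w) ≤ v ((n : K)) ^ (-(1 / ((n : ℝ) - 1))) := by
  intro z hz
  set r : ℝ := v ((n : K)) ^ (-(1 / ((n : ℝ) - 1))) with hr_def
  have hn0 : (n : K) ≠ 0 := Nat.cast_ne_zero.mpr (by omega)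
  have hvn : 0 < v (n : K) := v.pos hn0
  have hr_pos : 0 < r := Real.rpow_pos_of_pos hvn _
  -- coefficients of f are bounded by 1
  have hsplit : f = (f.roots.map fun a => X - C a).prod :=
    (IsAlgClosed.splits f).eq_prod_roots_of_monic hmonic
  have hfcoeff : ∀ k, v (f.coeff k) ≤ 1 := by
    intro k
    conv_lhs => rw [hsplit]
    exact aux_coeff_prod v hna _ (fun a ha => hroots a (isRoot_of_mem_roots ha)) k
  -- g := derivative f
  set g := Polynomial.derivative f with hg_def
  have hvz : v z ≤ 1 := hroots z hz
  -- coefficients of g are bounded by 1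
  have hgcoeff : ∀ k, v (g.coeff k) ≤ 1 := by
    intro k
    rw [hg_def, coeff_derivative]
    rw [v.map_mul]
    have h1 : v ((k : K) + 1) ≤ 1 := by
      have := aux_nat_le v hna (k + 1)
      push_cast at this
      exact this
    nlinarith [v.nonneg (f.coeff (k + 1)), v.nonneg ((k : K) + 1), hfcoeff (k + 1)]
  -- v (g.eval z) ≤ 1
  have hgz : v (g.eval z) ≤ 1 := by
    rw [eval_eq_sum_range]
    refine aux_sum_le v hna _ _ (fun k => ?_)
    rw [v.map_mul, v.map_pow]
    calc v (g.coeff k) * v z ^ k ≤ 1 * 1 := by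
          refine mul_le_mul (hgcoeff k) ?_ (by positivity) zero_le_one
          exact pow_le_one₀ (v.nonneg z) hvz
      _ = 1 := one_mul 1
  -- g ≠ 0, natDegree g = n - 1, leadingCoeff g = n
  have hcoeffg : g.coeff (n - 1) = (n : K) := by
    rw [hg_def, coeff_derivative]
    have h1 : n - 1 + 1 = n := by omega
    rw [h1]
    have : f.coeff n = 1 := by
      have := hmonic.leadingCoeff
      rwa [Polynomial.leadingCoeff, hdeg] at this
    rw [this, one_mul]
    have h2 : ((n - 1 : ℕ) : K) + 1 = (n : K) := by
      push_cast [Nat.cast_sub (show 1 ≤ n by omega)]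
      ring
    rw [h2]
  have hgne : g ≠ 0 := fun h => hn0 (by rw [← hcoeffg, h, coeff_zero])
  have hdegg : g.natDegree = n - 1 := by
    refine le_antisymm ?_ (le_natDegree_of_ne_zero (by rw [hcoeffg]; exact hn0))
    have hlt : g.natDegree < f.natDegree := natDegree_derivative_lt (by omega)
    rw [hdeg] at hlt
    omega
  have hlead : g.leadingCoeff = (n : K) := by
    rw [Polynomial.leadingCoeff, hdegg, hcoeffg]
  -- g splits
  have hgsplit : g = C g.leadingCoeff * (g.roots.map fun a => X - C a).prod :=
    (IsAlgClosed.splits g).eq_prod_roots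
  have hcard : Multiset.card g.roots = n - 1 := by
    rw [splits_iff_card_roots.mp (IsAlgClosed.splits g), hdegg]
  -- evaluate
  have heval : v (g.eval z) = v (n : K) * ((g.roots.map fun a => v (z - a))).prod := by
    conv_lhs => rw [hgsplit]
    rw [eval_mul, eval_C, hlead, v.map_mul]
    congr 1
    rw [eval_multiset_prod, Multiset.map_map, map_multiset_prod, Multiset.map_map]
    congr 1
    apply Multiset.map_congr rfl
    intro a _
    simp
  -- product bound
  have hprod : ((g.roots.map fun a => v (z - a))).prod ≤ r ^ Multiset.card g.roots := by
    have h1 : v (n : K) * ((g.roots.map fun a => v (z - a))).prod ≤ 1 := heval ▸ hgz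
    have h2 : r ^ (n - 1) = (v (n : K))⁻¹ := by
      rw [hr_def, ← Real.rpow_natCast (v ((n:K)) ^ (-(1 / ((n : ℝ) - 1)))) (n-1),
        ← Real.rpow_mul (le_of_lt hvn)]
      have hcast : ((n - 1 : ℕ) : ℝ) = (n : ℝ) - 1 := by
        push_cast [Nat.cast_sub (by omega : 1 ≤ n)]
        ring
      rw [hcast]
      have hne : (n : ℝ) - 1 ≠ 0 := by
        have : (2 : ℝ) ≤ (n : ℝ) := by exact_mod_cast hn
        linarith
      rw [neg_mul, one_div, inv_mul_cancel₀ hne, Real.rpow_neg_one]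
    rw [hcard, h2, inv_eq_one_div, le_div_iff₀ hvn, mul_comm]
    exact h1
  have hne0 : g.roots ≠ 0 := by
    intro h
    rw [h] at hcard
    simp at hcard
    omega
  obtain ⟨w, hw, hvw⟩ := aux_exists_small r hr_pos (fun a => v (z - a))
    (fun a => v.nonneg _) g.roots hne0 hprod
  exact ⟨w, (mem_roots hgne).mp hw, hvw⟩
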